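/- arXiv:2603.02279 — 4 statements merged into one kernel-verified Lean document; each statement's English description precedes it below -/
import Mathlib

section
/- Let K ⊆ L be algebraically closed fields and let P be a prime ideal of the polynomial ring K[X_1,…,X_n]. Then the extension P·L[X_1,…,X_n], i.e. the ideal of L[X_1,…,X_n] generated by the image of P under the inclusion K[X_1,…,X_n] ⊆ L[X_1,…,X_n], is a prime ideal of L[X_1,…,X_n]. -/
open MvPolynomial TensorProduct

/-- Every element of an extended ideal has all its basis coordinates in the ideal. -/
theorem ext_mem_iff {K L : Type*} [Field K] [Field L] [Algebra K L] {R : Type*}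
    [CommRing R] [Algebra K R] {ι : Type*} (b : Module.Basis ι K L) (P : Ideal R) (x : R ⊗[K] L) :
    x ∈ P.map (algebraMap R (R ⊗[K] L)) ↔
      ∀ i, (Algebra.TensorProduct.basis R b).repr x i ∈ P := by
  classical
  set c := Algebra.TensorProduct.basis R b with hc
  constructor
  · intro hx
    have hx' : x ∈ P • (⊤ : Submodule R (R ⊗[K] L)) := by
      rw [Ideal.smul_top_eq_map]; exact hx
    refine Submodule.smul_induction_on hx' ?_ ?_
    · intro r hr t _ i
      rw [map_smul]
      exact P.mul_mem_right _ hr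
    · intro u v hu hv i
      rw [map_add]
      exact P.add_mem (hu i) (hv i)
  · intro h
    have hx : x ∈ P • (⊤ : Submodule R (R ⊗[K] L)) := by
      have : x = (c.repr x).sum fun i r => r • c i := by
        conv_lhs => rw [← c.linearCombination_repr x]
        rw [Finsupp.linearCombination_apply]
      rw [this]
      exact Submodule.sum_mem _ fun i _ =>
        Submodule.smul_mem_smul (h i) Submodule.mem_top
    rw [Ideal.smul_top_eq_map] at hx
    exact hx

/-- if `K ⊆ L` is an extension of algebraically closed fields and `P` is a
prime ideal of `K[X₁,…,Xₙ]`, then its extension to `L[X₁,…,Xₙ]` is prime. -/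
theorem stmt4 (K L : Type*) [Field K] [Field L] [IsAlgClosed K] [IsAlgClosed L]
    [Algebra K L] (n : ℕ)
    (P : Ideal (MvPolynomial (Fin n) K)) (hP : P.IsPrime) :
    (P.map (MvPolynomial.map (algebraMap K L))).IsPrime := by
  classical
  haveI := hP
  set R := MvPolynomial (Fin n) K with hR
  -- the ring equivalence `R ⊗[K] L ≃+* L[X]`
  let e : R ⊗[K] L ≃+* MvPolynomial (Fin n) L :=
    (Algebra.TensorProduct.comm K R L).toRingEquiv.trans
      (MvPolynomial.algebraTensorAlgEquiv K L).toRingEquiv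
  have hcomm : ∀ r : R, e (algebraMap R (R ⊗[K] L) r) = MvPolynomial.map (algebraMap K L) r := by
    intro r
    show (MvPolynomial.algebraTensorAlgEquiv K L) ((Algebra.TensorProduct.comm K R L)
      (algebraMap R (R ⊗[K] L) r)) = _
    rw [Algebra.TensorProduct.algebraMap_apply, Algebra.TensorProduct.comm_tmul,
      MvPolynomial.algebraTensorAlgEquiv_tmul]
    simp
  have key : P.map (MvPolynomial.map (algebraMap K L)) =
      (P.map (algebraMap R (R ⊗[K] L))).map (e : R ⊗[K] L →+* MvPolynomial (Fin n) L) := by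
    rw [Ideal.map_map]
    congr 1
    exact RingHom.ext fun r => (hcomm r).symm
  suffices h : (P.map (algebraMap R (R ⊗[K] L))).IsPrime by
    rw [key]
    exact Ideal.map_isPrime_of_equiv e
  -- main part
  let b := Module.Basis.ofVectorSpace K L
  set c := Algebra.TensorProduct.basis R b with hc
  have hmem := ext_mem_iff b P
  constructor
  · -- ≠ ⊤
    intro htop
    have h1 : ∀ i, c.repr 1 i ∈ P := (hmem 1).mp (by rw [htop]; trivial)
    have hone : (1 : R ⊗[K] L) = (1 : R) ⊗ₜ[K] (1 : L) := rfl
    have hb1 : b.repr 1 ≠ 0 := fun h0 => one_ne_zero (b.repr.injective (by simp [h0]))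
    obtain ⟨i, hi⟩ := Finsupp.ne_iff.mp hb1
    have := h1 i
    rw [hone, Algebra.TensorProduct.basis_repr_tmul] at this
    simp only [one_smul, Finsupp.mapRange_apply] at this
    exact hP.ne_top (Ideal.eq_top_of_isUnit_mem _ this
      ((isUnit_iff_ne_zero.mpr (by simpa using hi)).map (algebraMap K R)))
  · intro x y hxy
    -- evaluation at points of the zero locus
    have heval : ∀ p ∈ MvPolynomial.zeroLocus K P,
        (∀ i, MvPolynomial.eval p (c.repr x i) = 0) ∨
        (∀ i, MvPolynomial.eval p (c.repr y i) = 0) := by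
      intro p hp
      let f : R →ₐ[K] L := (Algebra.ofId K L).comp (MvPolynomial.aeval p)
      have hf : ∀ q : R, f q = algebraMap K L (MvPolynomial.eval p q) := fun q => rfl
      let Φ : R ⊗[K] L →ₐ[K] L := Algebra.TensorProduct.productMap f (AlgHom.id K L)
      have hker : ∀ z ∈ P.map (algebraMap R (R ⊗[K] L)), Φ z = 0 := by
        intro z hz
        have hle : P.map (algebraMap R (R ⊗[K] L)) ≤ RingHom.ker (Φ : R ⊗[K] L →+* L) := by
          refine Ideal.map_le_iff_le_comap.mpr ?_
          intro q hq
          refine Ideal.mem_comap.mpr (RingHom.mem_ker.mpr ?_)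
          show Φ (algebraMap R (R ⊗[K] L) q) = 0
          rw [Algebra.TensorProduct.algebraMap_apply,
            Algebra.TensorProduct.productMap_apply_tmul]
          simp only [AlgHom.coe_id, id_eq, map_one, mul_one, hf]
          rw [show (algebraMap R R) q = q from rfl, show MvPolynomial.eval p q = 0 from MvPolynomial.mem_zeroLocus_iff.mp hp q hq, map_zero]
        exact RingHom.mem_ker.mp (hle hz)
      have hΦ : ∀ z : R ⊗[K] L,
          Φ z = ∑ i ∈ (c.repr z).support, MvPolynomial.eval p (c.repr z i) • (b i : L) := by
        intro z
        conv_lhs => rw [← c.linearCombination_repr z, Finsupp.linearCombination_apply, Finsupp.sum]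
        rw [map_sum]
        refine Finset.sum_congr rfl fun i _ => ?_
        rw [hc, Algebra.TensorProduct.basis_repr_symm_apply',
          Algebra.TensorProduct.productMap_apply_tmul, hf, AlgHom.coe_id, id_eq,
          Algebra.smul_def]
      have h0 : Φ x * Φ y = 0 := by
        rw [← map_mul]
        exact hker _ hxy
      rcases mul_eq_zero.mp h0 with h | h
      · left
        intro i
        by_cases hi : i ∈ (c.repr x).support
        · rw [hΦ] at h
          exact linearIndependent_iff'.mp b.linearIndependent _ _ h i hi
        · rw [Finsupp.notMem_support_iff.mp hi, map_zero]
      · right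
        intro i
        by_cases hi : i ∈ (c.repr y).support
        · rw [hΦ] at h
          exact linearIndependent_iff'.mp b.linearIndependent _ _ h i hi
        · rw [Finsupp.notMem_support_iff.mp hi, map_zero]
    -- the two coordinate ideals
    have hprod : Ideal.span (Set.range fun i => c.repr x i) *
        Ideal.span (Set.range fun i => c.repr y i) ≤ P := by
      rw [Ideal.span_mul_span', Ideal.span_le]
      rintro _ ⟨_, ⟨i, rfl⟩, _, ⟨j, rfl⟩, rfl⟩
      rw [← MvPolynomial.IsPrime.vanishingIdeal_zeroLocus (K := K) P]
      refine MvPolynomial.mem_vanishingIdeal_iff.mpr fun p hp => ?_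
      show MvPolynomial.eval p (c.repr x i * c.repr y j) = 0
      rw [map_mul]
      rcases heval p hp with h | h
      · rw [h i, zero_mul]
      · rw [h j, mul_zero]
    rcases hP.mul_le.mp hprod with h | h
    · exact Or.inl ((hmem x).mpr fun i => h (Ideal.subset_span ⟨i, rfl⟩))
    · exact Or.inr ((hmem y).mpr fun i => h (Ideal.subset_span ⟨i, rfl⟩))
end

section
/- Let K ⊆ L be algebraically closed fields and let I be a radical ideal of K[X_1,…,X_n] with minimal prime decomposition I = P_1 ∩ ⋯ ∩ P_m, where the P_i are pairwise distinct prime ideals none of which contains the intersection of the others. Then: (i) I·L[X_1,…,X_n] = (P_1·L[X_1,…,X_n]) ∩ ⋯ ∩ (P_m·L[X_1,…,X_n]); (ii) I·L[X_1,…,X_n] is a radical ideal; (iii) each P_i·L[X_1,…,X_n] is a prime ideal; (iv) the ideals P_i·L[X_1,…,X_n] are pairwise distinct and none of them contains the intersection of the others, so this is the minimal prime decomposition of I·L[X_1,…,X_n]. -/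
open MvPolynomial
open scoped Classical

section Aux

variable {K L : Type*} [Field K] [Field L] [Algebra K L] {σ : Type*} {ι : Type*}


/-- The `t`-th coordinate (w.r.t. a basis `B` of `L` over `K`) of a polynomial with
coefficients in `L`, as a polynomial with coefficients in `K`. -/
noncomputable def auxD (B : Module.Basis ι K L) (t : ι) (f : MvPolynomial σ L) : MvPolynomial σ K :=
  ∑ d ∈ f.support, monomial d (B.coord t (coeff d f))

lemma coeff_auxD (B : Module.Basis ι K L) (t : ι) (f : MvPolynomial σ L) (d : σ →₀ ℕ) :
    coeff d (auxD B t f) = B.coord t (coeff d f) := by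
  classical
  rw [auxD, coeff_sum]
  simp only [coeff_monomial]
  rw [Finset.sum_ite_eq' f.support d (fun d' => B.coord t (coeff d' f))]
  split_ifs with h
  · rfl
  · rw [notMem_support_iff.mp h, map_zero]

lemma auxD_add (B : Module.Basis ι K L) (t : ι) (f g : MvPolynomial σ L) :
    auxD B t (f + g) = auxD B t f + auxD B t g := by
  apply MvPolynomial.ext
  intro d
  simp [coeff_auxD, coeff_add]

lemma auxD_zero (B : Module.Basis ι K L) (t : ι) : auxD B t (0 : MvPolynomial σ L) = 0 := by
  apply MvPolynomial.ext
  intro d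
  simp [coeff_auxD]

/-- `auxD B t` as an additive monoid hom. -/
noncomputable def auxDhom (B : Module.Basis ι K L) (t : ι) :
    MvPolynomial σ L →+ MvPolynomial σ K where
  toFun := auxD B t
  map_zero' := auxD_zero B t
  map_add' := auxD_add B t

lemma auxD_sum (B : Module.Basis ι K L) (t : ι) {α : Type*} (s : Finset α)
    (g : α → MvPolynomial σ L) :
    auxD B t (∑ i ∈ s, g i) = ∑ i ∈ s, auxD B t (g i) :=
  map_sum (auxDhom B t) g s

lemma auxD_map_mul (B : Module.Basis ι K L) (t : ι) (p : MvPolynomial σ K) (f : MvPolynomial σ L) :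
    auxD B t (MvPolynomial.map (algebraMap K L) p * f) = p * auxD B t f := by
  apply MvPolynomial.ext
  intro d
  rw [coeff_auxD, coeff_mul, coeff_mul, map_sum]
  refine Finset.sum_congr rfl fun x _ => ?_
  rw [coeff_map, coeff_auxD, ← Algebra.smul_def, map_smul, smul_eq_mul]

/-- The finite set of basis indices appearing in `f`. -/
noncomputable def auxT (B : Module.Basis ι K L) (f : MvPolynomial σ L) : Finset ι :=
  f.support.biUnion fun d => (B.repr (coeff d f)).support

lemma auxD_eq_zero_of_not_mem (B : Module.Basis ι K L) (f : MvPolynomial σ L) {t : ι}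
    (ht : t ∉ auxT B f) : auxD B t f = 0 := by
  apply MvPolynomial.ext
  intro d
  rw [coeff_auxD, coeff_zero, Module.Basis.coord_apply]
  by_cases h : coeff d f = 0
  · rw [h, map_zero, Finsupp.coe_zero, Pi.zero_apply]
  · have hd : d ∈ f.support := mem_support_iff.mpr h
    have : t ∉ (B.repr (coeff d f)).support := fun hc => ht (Finset.mem_biUnion.mpr ⟨d, hd, hc⟩)
    exact Finsupp.notMem_support_iff.mp this

lemma auxT_mem_of_auxD_ne_zero (B : Module.Basis ι K L) (f : MvPolynomial σ L) {t : ι}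
    (ht : auxD B t f ≠ 0) : t ∈ auxT B f := by
  by_contra h
  exact ht (auxD_eq_zero_of_not_mem B f h)

lemma aux_decomp (B : Module.Basis ι K L) (f : MvPolynomial σ L) :
    f = ∑ t ∈ auxT B f, MvPolynomial.map (algebraMap K L) (auxD B t f) * C (B t) := by
  apply MvPolynomial.ext
  intro d
  rw [coeff_sum]
  have : ∀ t, coeff d (MvPolynomial.map (algebraMap K L) (auxD B t f) * C (B t))
      = B.repr (coeff d f) t • B t := by
    intro t
    rw [mul_comm, coeff_C_mul, coeff_map, coeff_auxD, mul_comm, ← Algebra.smul_def,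
      Module.Basis.coord_apply]
  simp only [this]
  by_cases h : coeff d f = 0
  · simp [h]
  · have hsub : (B.repr (coeff d f)).support ⊆ auxT B f := by
      intro t ht
      exact Finset.mem_biUnion.mpr ⟨d, mem_support_iff.mpr h, ht⟩
    have hv := B.linearCombination_repr (coeff d f)
    rw [Finsupp.linearCombination_apply, Finsupp.sum] at hv
    rw [← Finset.sum_subset hsub (fun t _ htn => by
      rw [Finsupp.notMem_support_iff.mp htn, zero_smul])]
    exact hv.symm

lemma auxD_map (B : Module.Basis ι K L) (t : ι) (p : MvPolynomial σ K) :
    auxD B t (MvPolynomial.map (algebraMap K L) p) = C (B.coord t 1) * p := by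
  apply MvPolynomial.ext
  intro d
  rw [coeff_auxD, coeff_map, coeff_C_mul, Algebra.algebraMap_eq_smul_one, map_smul,
    smul_eq_mul, mul_comm]

/-- Membership in the extended ideal is equivalent to coordinatewise membership. -/
lemma aux_mem_map_iff (B : Module.Basis ι K L) (J : Ideal (MvPolynomial σ K)) (f : MvPolynomial σ L) :
    f ∈ J.map (MvPolynomial.map (algebraMap K L)) ↔ ∀ t, auxD B t f ∈ J := by
  constructor
  · intro hf t
    -- the set of polynomials all of whose coordinates lie in `J` is an ideal containing the image
    let J' : Ideal (MvPolynomial σ L) :=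
      { carrier := {g | ∀ t, auxD B t g ∈ J}
        zero_mem' := fun t => by rw [auxD_zero]; exact J.zero_mem
        add_mem' := fun {a b} ha hb t => by rw [auxD_add]; exact J.add_mem (ha t) (hb t)
        smul_mem' := fun r g hg t => by
          have hdec := aux_decomp B g
          have : r • g = ∑ s ∈ auxT B g,
              MvPolynomial.map (algebraMap K L) (auxD B s g) * (C (B s) * r) := by
            rw [smul_eq_mul, mul_comm]
            conv_lhs => rw [hdec]
            rw [Finset.sum_mul]
            refine Finset.sum_congr rfl fun s _ => by ring
          rw [this, auxD_sum]
          refine J.sum_mem fun s _ => ?_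
          show auxD B t _ ∈ J
          rw [auxD_map_mul]
          exact J.mul_mem_right _ (hg s) }
    have hle : J.map (MvPolynomial.map (algebraMap K L)) ≤ J' := by
      rw [Ideal.map_le_iff_le_comap]
      intro g hg
      intro s
      rw [auxD_map]
      exact J.mul_mem_left _ hg
    exact hle hf t
  · intro h
    rw [aux_decomp B f]
    refine Ideal.sum_mem _ fun t _ => ?_
    exact Ideal.mul_mem_right _ _ (Ideal.mem_map_of_mem _ (h t))

lemma aux_exists_coord_one (B : Module.Basis ι K L) : ∃ t, B.coord t 1 ≠ 0 := by
  by_contra h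
  push_neg at h
  have : B.repr (1 : L) = 0 := Finsupp.ext fun t => h t
  have h1 : (1 : L) = 0 := by
    have := congrArg B.repr.symm this
    simpa using this
  exact one_ne_zero h1

lemma aux_map_mem_iff (B : Module.Basis ι K L) (J : Ideal (MvPolynomial σ K)) (p : MvPolynomial σ K) :
    MvPolynomial.map (algebraMap K L) p ∈ J.map (MvPolynomial.map (algebraMap K L)) ↔ p ∈ J := by
  constructor
  · intro hp
    obtain ⟨t, ht⟩ := aux_exists_coord_one B
    have := (aux_mem_map_iff B J _).mp hp t
    rw [auxD_map] at this
    have h2 := J.mul_mem_left (C (B.coord t 1)⁻¹) this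
    rwa [← mul_assoc, ← C_mul, inv_mul_cancel₀ ht, C_1, one_mul] at h2
  · exact fun hp => Ideal.mem_map_of_mem _ hp

lemma aux_map_iInf {κ : Type*} (B : Module.Basis ι K L) (Q : κ → Ideal (MvPolynomial σ K)) :
    (⨅ i, Q i).map (MvPolynomial.map (algebraMap K L)) =
      ⨅ i, (Q i).map (MvPolynomial.map (algebraMap K L)) := by
  ext f
  rw [aux_mem_map_iff B, Ideal.mem_iInf]
  constructor
  · intro h i
    rw [aux_mem_map_iff B]
    intro t
    exact Ideal.mem_iInf.mp (h t) i
  · intro h t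
    rw [Ideal.mem_iInf]
    intro i
    exact (aux_mem_map_iff B _ _).mp (h i) t

end Aux

section Prime

variable {K L : Type*} [Field K] [Field L] [IsAlgClosed K] [Algebra K L]
  {σ : Type*} [Finite σ] {ι : Type*}

lemma aux_isPrime_map (B : Module.Basis ι K L) (P : Ideal (MvPolynomial σ K)) (hP : P.IsPrime) :
    (P.map (MvPolynomial.map (algebraMap K L))).IsPrime := by
  haveI := hP
  constructor
  · intro htop
    have : (1 : MvPolynomial σ L) ∈ P.map (MvPolynomial.map (algebraMap K L)) := by
      rw [htop]; trivial
    have h1 : MvPolynomial.map (algebraMap K L) (1 : MvPolynomial σ K)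
        ∈ P.map (MvPolynomial.map (algebraMap K L)) := by rwa [map_one]
    exact hP.ne_top (Ideal.eq_top_iff_one P |>.mpr ((aux_map_mem_iff B P 1).mp h1))
  · intro p q hpq
    by_contra hcon
    push_neg at hcon
    obtain ⟨hp, hq⟩ := hcon
    -- pick coordinates witnessing non-membership
    have hp' : ¬ ∀ t, auxD B t p ∈ P := fun H => hp ((aux_mem_map_iff B P p).mpr H)
    have hq' : ¬ ∀ t, auxD B t q ∈ P := fun H => hq ((aux_mem_map_iff B P q).mpr H)
    push_neg at hp' hq'
    obtain ⟨tp, htp⟩ := hp'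
    obtain ⟨tq, htq⟩ := hq'
    have htpT : tp ∈ auxT B p := auxT_mem_of_auxD_ne_zero B p (fun h0 => htp (h0 ▸ P.zero_mem))
    have htqT : tq ∈ auxT B q := auxT_mem_of_auxD_ne_zero B q (fun h0 => htq (h0 ▸ P.zero_mem))
    -- ideals generated by coordinates
    set A1 : Ideal (MvPolynomial σ K) :=
      Ideal.span ((fun s => auxD B s p) '' (auxT B p : Set ι)) with hA1
    set A2 : Ideal (MvPolynomial σ K) :=
      Ideal.span ((fun s => auxD B s q) '' (auxT B q : Set ι)) with hA2
    have key : A1 * A2 ≤ P := by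
      have hvan : A1 * A2 ≤ vanishingIdeal K (zeroLocus K P) := by
        intro g hg x hx
        -- the evaluation at the point `x` extended to `L`
        set ε : MvPolynomial σ L →+* L := eval (fun i => algebraMap K L (x i)) with hε
        have hεφ : ∀ r : MvPolynomial σ K,
            ε (MvPolynomial.map (algebraMap K L) r) = algebraMap K L (eval x r) := by
          intro r
          rw [hε, eval_map,
            show (eval x r : K) = eval₂ (RingHom.id K) x r from rfl,
            eval₂_comp_left (algebraMap K L) (RingHom.id K) x r, RingHom.comp_id]
          rfl
        have hker : P.map (MvPolynomial.map (algebraMap K L)) ≤ RingHom.ker ε := by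
          rw [Ideal.map_le_iff_le_comap]
          intro r hr
          show ε (MvPolynomial.map (algebraMap K L) r) = 0
          rw [hεφ r, show eval x r = 0 from hx r hr, map_zero]
        have hpq0 : ε p * ε q = 0 := by
          rw [← map_mul]
          exact hker hpq
        -- evaluation of the decomposition
        have hεdec : ∀ f : MvPolynomial σ L,
            ε f = ∑ s ∈ auxT B f, (eval x (auxD B s f)) • B s := by
          intro f
          conv_lhs => rw [aux_decomp B f]
          rw [map_sum]
          refine Finset.sum_congr rfl fun s _ => ?_
          rw [map_mul, hεφ, Algebra.smul_def]
          congr 1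
          rw [hε, eval_C]
        -- if ε f = 0 then all coordinates vanish at x
        have hvanish : ∀ f : MvPolynomial σ L, ε f = 0 →
            ∀ s₀ ∈ auxT B f, eval x (auxD B s₀ f) = 0 := by
          intro f hf s₀ hs₀
          have h0 : (∑ s ∈ auxT B f, (eval x (auxD B s f)) • B s) = 0 := by
            rw [← hεdec f, hf]
          have := congrArg (fun v => B.repr v s₀) h0
          simp only [map_sum, map_smul, map_zero, Module.Basis.repr_self, Finsupp.coe_zero,
            Pi.zero_apply, Finsupp.coe_finset_sum, Finset.sum_apply, Finsupp.coe_smul,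
            Pi.smul_apply, Finsupp.single_apply, smul_eq_mul, mul_ite, mul_one, mul_zero] at this
          rw [Finset.sum_ite_eq' (auxT B f) s₀ (fun s => eval x (auxD B s f)), if_pos hs₀] at this
          exact this
        -- the dichotomy
        rcases mul_eq_zero.mp hpq0 with h | h
        · have hA1x : A1 ≤ vanishingIdeal K {x} := by
            rw [hA1, Ideal.span_le]
            rintro _ ⟨s, hs, rfl⟩
            intro y hy
            rw [Set.mem_singleton_iff.mp hy]
            exact hvanish p h s hs
          exact hA1x (Ideal.mul_le_left hg) x rfl
        · have hA2x : A2 ≤ vanishingIdeal K {x} := by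
            rw [hA2, Ideal.span_le]
            rintro _ ⟨s, hs, rfl⟩
            intro y hy
            rw [Set.mem_singleton_iff.mp hy]
            exact hvanish q h s hs
          exact hA2x (Ideal.mul_le_right hg) x rfl
      calc A1 * A2 ≤ vanishingIdeal K (zeroLocus K P) := hvan
        _ = P := MvPolynomial.IsPrime.vanishingIdeal_zeroLocus P
    rcases hP.mul_le.mp key with h | h
    · exact htp (h (Ideal.subset_span ⟨tp, htpT, rfl⟩))
    · exact htq (h (Ideal.subset_span ⟨tq, htqT, rfl⟩))

end Prime

/-- extension of a minimal prime decomposition of a radical ideal along an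
extension `K ⊆ L` of algebraically closed fields. -/
theorem stmt5 (K L : Type*) [Field K] [Field L] [IsAlgClosed K] [IsAlgClosed L]
    [Algebra K L] (n : ℕ) (m : ℕ) (hm : 0 < m)
    (I : Ideal (MvPolynomial (Fin n) K)) (hI : I.IsRadical)
    (P : Fin m → Ideal (MvPolynomial (Fin n) K))
    (hprime : ∀ i, (P i).IsPrime)
    (hdistinct : Function.Injective P)
    (hmin : ∀ i : Fin m, ¬ ((⨅ j : {j : Fin m // j ≠ i}, P (j : Fin m)) ≤ P i))
    (hdec : I = ⨅ i, P i) :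
    I.map (MvPolynomial.map (algebraMap K L)) =
        (⨅ i, (P i).map (MvPolynomial.map (algebraMap K L))) ∧
    (I.map (MvPolynomial.map (algebraMap K L))).IsRadical ∧
    (∀ i, ((P i).map (MvPolynomial.map (algebraMap K L))).IsPrime) ∧
    Function.Injective (fun i => (P i).map (MvPolynomial.map (algebraMap K L))) ∧
    (∀ i : Fin m, ¬ ((⨅ j : {j : Fin m // j ≠ i},
        (P (j : Fin m)).map (MvPolynomial.map (algebraMap K L))) ≤
        (P i).map (MvPolynomial.map (algebraMap K L)))) := by
  let B' := Module.Basis.ofVectorSpace K L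
  have hmapiInf : I.map (MvPolynomial.map (algebraMap K L)) =
      ⨅ i, (P i).map (MvPolynomial.map (algebraMap K L)) := by
    rw [hdec, aux_map_iInf B']
  have hPrime : ∀ i, ((P i).map (MvPolynomial.map (algebraMap K L))).IsPrime :=
    fun i => aux_isPrime_map B' (P i) (hprime i)
  refine ⟨hmapiInf, ?_, hPrime, ?_, ?_⟩
  · rw [hmapiInf]
    exact Ideal.isRadical_iInf _ fun i => (hPrime i).isRadical
  · intro i j hij
    have hij' : (P i).map (MvPolynomial.map (algebraMap K L)) =
        (P j).map (MvPolynomial.map (algebraMap K L)) := hij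
    apply hdistinct
    ext g
    constructor
    · intro hg
      have : MvPolynomial.map (algebraMap K L) g ∈
          (P j).map (MvPolynomial.map (algebraMap K L)) := by
        rw [← hij']; exact Ideal.mem_map_of_mem _ hg
      exact (aux_map_mem_iff B' (P j) g).mp this
    · intro hg
      have : MvPolynomial.map (algebraMap K L) g ∈
          (P i).map (MvPolynomial.map (algebraMap K L)) := by
        rw [hij']; exact Ideal.mem_map_of_mem _ hg
      exact (aux_map_mem_iff B' (P i) g).mp this
  · intro i hle
    obtain ⟨g, hg1, hg2⟩ := SetLike.not_le_iff_exists.mp (hmin i)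
    have hg3 : MvPolynomial.map (algebraMap K L) g ∈
        ⨅ j : {j : Fin m // j ≠ i}, (P (j : Fin m)).map (MvPolynomial.map (algebraMap K L)) := by
      rw [Ideal.mem_iInf]
      intro j
      exact Ideal.mem_map_of_mem _ (Ideal.mem_iInf.mp hg1 j)
    exact hg2 ((aux_map_mem_iff B' (P i) g).mp (hle hg3))
end

section
/- Let K be a field, let r, n, D be natural numbers with r ≤ n, and consider the polynomial ring K[T_0,…,T_r, U_{0,0},…,U_{0,n},…,U_{r,0},…,U_{r,n}], whose monomials are ordered by the graded lexicographic order induced by T_0 > U_{0,0} > ⋯ > U_{0,n} > T_1 > U_{1,0} > ⋯ > U_{1,n} > ⋯ > T_r > U_{r,0} > ⋯ > U_{r,n}. Let C ∈ K[U_{0,0},…,U_{r,n}] be a polynomial such that every monomial of C is less than or equal to U_{0,0}^D·U_{1,1}^D·⋯·U_{r,r}^D in this order, and such that the coefficient of U_{0,0}^D·U_{1,1}^D·⋯·U_{r,r}^D in C is 1. Let P = (−1)^D·C(v_0,…,v_r), where for each i the substitution v_i replaces U_{i,0} by U_{i,0} − T_i and leaves U_{i,1},…,U_{i,n} unchanged.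 Then the leading monomial of P is T_0^D·U_{1,1}^D·⋯·U_{r,r}^D and its leading coefficient is 1. -/
open MvPolynomial

/-- Graded lexicographic "less than" on monomial exponents, where `idx` gives the
position of each variable in the variable ordering (smaller index = more significant). -/
def grlexLt {σ : Type*} (idx : σ → ℕ) (a b : σ →₀ ℕ) : Prop :=
  (a.sum fun _ e => e) < (b.sum fun _ e => e) ∨
  ((a.sum fun _ e => e) = (b.sum fun _ e => e) ∧
    ∃ x, a x < b x ∧ ∀ y, idx y < idx x → a y = b y)

/-- Position of the variable `U_{i,j}` in the ordering `U_{0,0} > ⋯ > U_{r,n}`. -/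
def idxU (r n : ℕ) (x : Fin (r + 1) × Fin (n + 1)) : ℕ :=
  (x.1 : ℕ) * (n + 1) + (x.2 : ℕ)

/-- Position of a variable of `K[T₀,…,T_r,U_{0,0},…,U_{r,n}]` in the ordering
`T₀ > U_{0,0} > ⋯ > U_{0,n} > T₁ > ⋯ > T_r > U_{r,0} > ⋯ > U_{r,n}`. -/
def idxTU (r n : ℕ) (x : Fin (r + 1) ⊕ (Fin (r + 1) × Fin (n + 1))) : ℕ :=
  Sum.elim (fun i : Fin (r + 1) => (i : ℕ) * (n + 2))
    (fun ij : Fin (r + 1) × Fin (n + 1) => (ij.1 : ℕ) * (n + 2) + 1 + (ij.2 : ℕ)) x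

/-- The substitution `U_{i,0} ↦ U_{i,0} − T_i`, `U_{i,j} ↦ U_{i,j}` for `j ≠ 0`,
landing in `K[T₀,…,T_r,U_{0,0},…,U_{r,n}]`. -/
noncomputable def substTU (K : Type*) [CommRing K] (r n : ℕ)
    (C : MvPolynomial (Fin (r + 1) × Fin (n + 1)) K) :
    MvPolynomial (Fin (r + 1) ⊕ (Fin (r + 1) × Fin (n + 1))) K :=
  MvPolynomial.aeval (fun x : Fin (r + 1) × Fin (n + 1) =>
    if x.2 = 0 then
      MvPolynomial.X (Sum.inr x) - MvPolynomial.X (Sum.inl x.1)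
    else MvPolynomial.X (Sum.inr x)) C

namespace Stmt9Aux

variable {K : Type*} [Field K] {r n : ℕ}

/-- projection from TU-variables to U-variables -/
def wp (r n : ℕ) : (Fin (r+1) ⊕ (Fin (r+1) × Fin (n+1))) → Fin (r+1) × Fin (n+1) :=
  Sum.elim (fun i => (i, 0)) id

noncomputable def wgt (r n : ℕ) :
    (Fin (r+1) ⊕ (Fin (r+1) × Fin (n+1))) → ((Fin (r+1) × Fin (n+1)) →₀ ℕ) :=
  fun y => Finsupp.single (wp r n y) 1

noncomputable def vf (K : Type*) [Field K] (r n : ℕ) :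
    (Fin (r+1) × Fin (n+1)) → MvPolynomial (Fin (r+1) ⊕ (Fin (r+1) × Fin (n+1))) K :=
  fun x => if x.2 = 0 then
      MvPolynomial.X (Sum.inr x) - MvPolynomial.X (Sum.inl x.1)
    else MvPolynomial.X (Sum.inr x)

theorem vf_hom (x : Fin (r+1) × Fin (n+1)) :
    IsWeightedHomogeneous (wgt r n) (vf K r n x) (Finsupp.single x 1) := by
  obtain ⟨i, j⟩ := x
  by_cases hj : j = 0
  · subst hj
    have h1 : IsWeightedHomogeneous (wgt r n)
        (MvPolynomial.X (R := K) (Sum.inr ((i, 0) : Fin (r+1) × Fin (n+1))))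
        (Finsupp.single ((i,0) : Fin (r+1) × Fin (n+1)) 1) := by
      simpa [wgt, wp] using isWeightedHomogeneous_X K (wgt r n) (Sum.inr ((i,0)))
    have h2 : IsWeightedHomogeneous (wgt r n)
        (MvPolynomial.X (R := K) (Sum.inl i : Fin (r+1) ⊕ (Fin (r+1) × Fin (n+1))))
        (Finsupp.single ((i,0) : Fin (r+1) × Fin (n+1)) 1) := by
      simpa [wgt, wp] using isWeightedHomogeneous_X K (wgt r n)
        (Sum.inl i : Fin (r+1) ⊕ (Fin (r+1) × Fin (n+1)))
    have := Submodule.sub_mem _ ((mem_weightedHomogeneousSubmodule K (wgt r n) _ _).mpr h1)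
      ((mem_weightedHomogeneousSubmodule K (wgt r n) _ _).mpr h2)
    simpa [vf] using (mem_weightedHomogeneousSubmodule K (wgt r n) _ _).mp this
  · simpa [vf, hj, wgt, wp] using isWeightedHomogeneous_X K (wgt r n) (Sum.inr ((i,j)))

theorem hom_pow {σM : Type*} {w : σM → ((Fin (r+1) × Fin (n+1)) →₀ ℕ)}
    {p : MvPolynomial σM K} {a} (h : IsWeightedHomogeneous w p a) (k : ℕ) :
    IsWeightedHomogeneous w (p ^ k) (k • a) := by
  induction k with
  | zero => simpa using isWeightedHomogeneous_one K w
  | succ k ih =>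
      rw [pow_succ, succ_nsmul]
      exact ih.mul h

theorem Qm_hom (m : (Fin (r+1) × Fin (n+1)) →₀ ℕ) :
    IsWeightedHomogeneous (wgt r n) (∏ x ∈ m.support, vf K r n x ^ m x) m := by
  have h := IsWeightedHomogeneous.prod (R := K) m.support (fun x => vf K r n x ^ m x)
    (fun x => m x • Finsupp.single x 1) (fun x _ => hom_pow (vf_hom x) (m x))
  have he : (∑ x ∈ m.support, m x • Finsupp.single x 1) = m := by
    have hs : ∀ x : Fin (r+1) × Fin (n+1), ∀ e : ℕ,
        e • Finsupp.single x (1:ℕ) = Finsupp.single x e := by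
      intro x e; rw [Finsupp.smul_single]; simp
    calc (∑ x ∈ m.support, m x • Finsupp.single x 1)
        = ∑ x ∈ m.support, Finsupp.single x (m x) :=
          Finset.sum_congr rfl fun x _ => hs x (m x)
      _ = m := Finsupp.sum_single m
  rwa [he] at h

theorem weight_apply_pair (m' : (Fin (r+1) ⊕ (Fin (r+1) × Fin (n+1))) →₀ ℕ)
    (i : Fin (r+1)) (j : Fin (n+1)) :
    Finsupp.weight (wgt r n) m' (i, j) =
      m' (Sum.inr (i, j)) + (if j = 0 then m' (Sum.inl i) else 0) := by
  induction m' using Finsupp.induction_linear with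
  | zero => simp
  | add f g hf hg =>
      rw [map_add, Finsupp.add_apply, hf, hg]
      simp only [Finsupp.add_apply]
      split_ifs <;> omega
  | single y e =>
      have hw : Finsupp.weight (wgt r n) (Finsupp.single y e) = e • wgt r n y := by
        rw [Finsupp.weight_apply, Finsupp.sum_single_index]; simp
      rw [hw]
      rcases y with i' | ⟨i', j'⟩ <;>
        simp only [wgt, wp, Sum.elim_inl, Sum.elim_inr, id, Finsupp.smul_single,
          smul_eq_mul, mul_one, Finsupp.single_apply, Prod.mk.injEq, Sum.inr.injEq,
          Sum.inl.injEq] <;>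
      · split_ifs <;> simp_all

theorem weight_degree (m' : (Fin (r+1) ⊕ (Fin (r+1) × Fin (n+1))) →₀ ℕ) :
    ((Finsupp.weight (wgt r n) m').sum fun _ e => e) = m'.sum fun _ e => e := by
  induction m' using Finsupp.induction_linear with
  | zero => simp
  | add f g hf hg =>
      rw [map_add, Finsupp.sum_add_index' (fun _ => rfl) (fun _ _ _ => rfl),
        Finsupp.sum_add_index' (fun _ => rfl) (fun _ _ _ => rfl), hf, hg]
  | single y e =>
      have hw : Finsupp.weight (wgt r n) (Finsupp.single y e) = e • wgt r n y := by
        rw [Finsupp.weight_apply, Finsupp.sum_single_index]; simp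
      rw [hw]
      simp [wgt, Finsupp.smul_single, Finsupp.sum_single_index]

theorem block_le {a b N : ℕ} (h : a < b) : a * N + N ≤ b * N := by
  have := Nat.mul_le_mul_right N (Nat.succ_le_of_lt h)
  simpa [Nat.succ_mul] using this

theorem Mval (h : r + 1 ≤ n + 1) (D : ℕ) (i : Fin (r+1)) (j : Fin (n+1)) :
    ((∑ i' : Fin (r+1), Finsupp.single ((i', Fin.castLE h i') : Fin (r+1) × Fin (n+1)) D) :
      (Fin (r+1) × Fin (n+1)) →₀ ℕ) (i, j) = if (j : ℕ) = (i : ℕ) then D else 0 := by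
  rw [Finsupp.finset_sum_apply]
  rw [Finset.sum_eq_single i]
  · simp only [Finsupp.single_apply, Prod.mk.injEq]
    by_cases hj : (j:ℕ) = (i:ℕ)
    · have : Fin.castLE h i = j := by apply Fin.ext; simp [hj]
      simp [this, hj]
    · have : ¬ (Fin.castLE h i = j) := by
        intro hc; apply hj; rw [← hc]; simp
      simp [this, hj]
  · intro i' _ hne
    simp [Finsupp.single_apply, Prod.mk.injEq, hne]
  · simp

theorem M'inl (h : r + 1 ≤ n + 1) (D : ℕ) (i : Fin (r+1)) :
    ((Finsupp.single (Sum.inl 0 : Fin (r+1) ⊕ (Fin (r+1) × Fin (n+1))) D +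
      ∑ i' ∈ Finset.univ.erase (0 : Fin (r+1)),
        Finsupp.single (Sum.inr ((i', Fin.castLE h i') : Fin (r+1) × Fin (n+1))) D) :
      (Fin (r+1) ⊕ (Fin (r+1) × Fin (n+1))) →₀ ℕ) (Sum.inl i) =
      if i = 0 then D else 0 := by
  rw [Finsupp.add_apply, Finsupp.finset_sum_apply]
  have hz : ∀ i' ∈ Finset.univ.erase (0 : Fin (r+1)),
      (Finsupp.single (Sum.inr ((i', Fin.castLE h i') : Fin (r+1) × Fin (n+1))) D :
        (Fin (r+1) ⊕ (Fin (r+1) × Fin (n+1))) →₀ ℕ) (Sum.inl i) = 0 := by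
    intro i' _; simp [Finsupp.single_apply]
  rw [Finset.sum_eq_zero hz]
  simp [Finsupp.single_apply, eq_comm]

theorem M'inr (h : r + 1 ≤ n + 1) (D : ℕ) (i : Fin (r+1)) (j : Fin (n+1)) :
    ((Finsupp.single (Sum.inl 0 : Fin (r+1) ⊕ (Fin (r+1) × Fin (n+1))) D +
      ∑ i' ∈ Finset.univ.erase (0 : Fin (r+1)),
        Finsupp.single (Sum.inr ((i', Fin.castLE h i') : Fin (r+1) × Fin (n+1))) D) :
      (Fin (r+1) ⊕ (Fin (r+1) × Fin (n+1))) →₀ ℕ) (Sum.inr (i, j)) =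
      if i ≠ 0 ∧ (j : ℕ) = (i : ℕ) then D else 0 := by
  rw [Finsupp.add_apply, Finsupp.finset_sum_apply]
  rw [Finsupp.single_apply]
  simp only [reduceCtorEq, if_false, zero_add]
  by_cases hi : i = 0
  · subst hi
    rw [Finset.sum_eq_zero]
    · simp
    · intro i' hi'
      rw [Finset.mem_erase] at hi'
      simp [Finsupp.single_apply, Prod.mk.injEq, hi'.1]
  · rw [Finset.sum_eq_single i]
    · simp only [Finsupp.single_apply, Sum.inr.injEq, Prod.mk.injEq]
      by_cases hj : (j:ℕ) = (i:ℕ)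
      · have : Fin.castLE h i = j := by apply Fin.ext; simp [hj]
        simp [this, hj, hi]
      · have : ¬ (Fin.castLE h i = j) := by
          intro hc; apply hj; rw [← hc]; simp
        simp [this, hj, hi]
    · intro i' _ hne
      simp [Finsupp.single_apply, Prod.mk.injEq, hne]
    · intro hmem
      exact absurd (Finset.mem_erase.mpr ⟨hi, Finset.mem_univ i⟩) hmem

theorem weight_M' (h : r + 1 ≤ n + 1) (D : ℕ) :
    Finsupp.weight (wgt r n)
      ((Finsupp.single (Sum.inl 0 : Fin (r+1) ⊕ (Fin (r+1) × Fin (n+1))) D +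
        ∑ i' ∈ Finset.univ.erase (0 : Fin (r+1)),
          Finsupp.single (Sum.inr ((i', Fin.castLE h i') : Fin (r+1) × Fin (n+1))) D)) =
      ∑ i' : Fin (r+1), Finsupp.single ((i', Fin.castLE h i') : Fin (r+1) × Fin (n+1)) D := by
  ext x
  obtain ⟨i, j⟩ := x
  rw [weight_apply_pair, M'inr h, Mval h]
  have hj0 : (j = 0) ↔ ((j:ℕ) = 0) := by rw [Fin.ext_iff]; simp
  have hi0 : (i = 0) ↔ ((i:ℕ) = 0) := by rw [Fin.ext_iff]; simp
  by_cases h1 : i = 0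
  · subst h1
    by_cases h2 : j = 0
    · subst h2
      rw [M'inl h]
      simp
    · have h2' : (j:ℕ) ≠ 0 := fun hc => h2 (hj0.mpr hc)
      simp [h2, h2', Fin.val_zero]
  · have h1' : (i:ℕ) ≠ 0 := fun hc => h1 (hi0.mpr hc)
    by_cases h2 : j = 0
    · subst h2
      rw [M'inl h]
      simp [h1, Fin.val_zero, eq_comm, h1']
    · simp [h1, h2]

theorem idxU_inj (a b : Fin (r+1) × Fin (n+1)) (h : idxU r n a = idxU r n b) : a = b := by
  obtain ⟨i1, j1⟩ := a; obtain ⟨i2, j2⟩ := b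
  have h : (i1:ℕ)*(n+1)+(j1:ℕ) = (i2:ℕ)*(n+1)+(j2:ℕ) := h
  have hj1 : (j1:ℕ) < n+1 := j1.isLt
  have hj2 : (j2:ℕ) < n+1 := j2.isLt
  have hii : (i1:ℕ) = (i2:ℕ) := by
    rcases lt_trichotomy (i1:ℕ) (i2:ℕ) with hl | he | hl
    · have := block_le (N := n+1) hl; omega
    · exact he
    · have := block_le (N := n+1) hl; omega
  have h2 : (i1:ℕ)*(n+1) = (i2:ℕ)*(n+1) := by rw [hii]
  have hjj : (j1:ℕ) = (j2:ℕ) := by omega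
  exact Prod.ext (Fin.ext hii) (Fin.ext hjj)

theorem claimB (Dv : ℕ) (m : (Fin (r+1) × Fin (n+1)) →₀ ℕ)
    (m' M'' : (Fin (r+1) ⊕ (Fin (r+1) × Fin (n+1))) →₀ ℕ)
    (M : (Fin (r+1) × Fin (n+1)) →₀ ℕ)
    (hM'inl : ∀ i, M'' (Sum.inl i) = if i = 0 then Dv else 0)
    (hM'inr : ∀ i j, M'' (Sum.inr (i,j)) = if i ≠ 0 ∧ (j:ℕ) = (i:ℕ) then Dv else 0)
    (hMval : ∀ i j, M (i,j) = if (j:ℕ) = (i:ℕ) then Dv else 0)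
    (hrel : ∀ i j, m' (Sum.inr (i,j)) + (if j = 0 then m' (Sum.inl i) else 0) = m (i,j))
    (hstar : ∀ x, (∀ y, idxU r n y < idxU r n x → m y = M y) → m x ≤ M x)
    (x' : Fin (r+1) ⊕ (Fin (r+1) × Fin (n+1)))
    (hpre : ∀ y, idxTU r n y < idxTU r n x' → m' y = M'' y)
    (hne : m' x' ≠ M'' x') : m' x' < M'' x' := by
  have hjz : ∀ j : Fin (n+1), (j = 0) ↔ ((j:ℕ) = 0) := fun j => by rw [Fin.ext_iff]; simp
  have hiz : ∀ i : Fin (r+1), (i = 0) ↔ ((i:ℕ) = 0) := fun i => by rw [Fin.ext_iff]; simp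
  have hMM' : ∀ i j, M'' (Sum.inr (i,j)) + (if j = 0 then M'' (Sum.inl i) else 0) = M (i,j) := by
    intro i j
    rw [hM'inr, hM'inl, hMval]
    by_cases h1 : i = 0
    · subst h1
      by_cases h2 : j = 0
      · subst h2; simp
      · have h2' : (j:ℕ) ≠ 0 := fun hc => h2 ((hjz j).mpr hc)
        simp [h2, h2', Fin.val_zero]
    · have h1' : (i:ℕ) ≠ 0 := fun hc => h1 ((hiz i).mpr hc)
      by_cases h2 : j = 0
      · subst h2
        simp [h1, Fin.val_zero, eq_comm, h1']
      · simp [h1, h2]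
  have hU : ∀ i j, idxTU r n (Sum.inr (i,j)) < idxTU r n x' → m (i,j) = M (i,j) := by
    intro i j hlt
    have hlt2 : idxTU r n (Sum.inl i) < idxTU r n x' := by
      refine lt_of_le_of_lt ?_ hlt
      simp only [idxTU, Sum.elim_inl, Sum.elim_inr]
      omega
    have e1 := hpre _ hlt
    have e2 := hpre _ hlt2
    rw [← hrel i j, ← hMM' i j, e1]
    by_cases h2 : j = 0 <;> simp [h2, e2]
  rcases x' with i | ⟨i, j⟩
  · -- x' = inl i
    have hUlt : ∀ (i' : Fin (r+1)) (j' : Fin (n+1)), (i':ℕ) < (i:ℕ) → m (i',j') = M (i',j') := by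
      intro i' j' hii
      apply hU
      have hb := block_le (N := n+2) hii
      have hj' := j'.isLt
      simp only [idxTU, Sum.elim_inl, Sum.elim_inr]
      omega
    have hpreU : ∀ y, idxU r n y < idxU r n (i, (0:Fin (n+1))) → m y = M y := by
      rintro ⟨i', j'⟩ hy
      unfold idxU at hy
      simp only [Fin.val_zero, add_zero] at hy
      have hlt : (i':ℕ) < (i:ℕ) := by
        by_contra hc
        push_neg at hc
        have := Nat.mul_le_mul_right (n+1) hc
        omega
      exact hUlt i' j' hlt
    have le1 : m (i, 0) ≤ M (i, 0) := hstar _ hpreU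
    have e0 := hrel i 0
    rw [if_pos rfl] at e0
    rw [hM'inl]
    rw [hM'inl] at hne
    by_cases h1 : i = 0
    · subst h1
      have hMv : M ((0:Fin (r+1)), (0:Fin (n+1))) = Dv := by rw [hMval]; simp
      rw [if_pos rfl]
      rw [if_pos rfl] at hne
      omega
    · exfalso
      have h1' : (i:ℕ) ≠ 0 := fun hc => h1 ((hiz i).mpr hc)
      have hMv : M (i, 0) = 0 := by
        rw [hMval]; simp [Fin.val_zero, eq_comm, h1']
      rw [if_neg h1] at hne
      omega
  · -- x' = inr (i, j)
    have einl : m' (Sum.inl i) = M'' (Sum.inl i) := by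
      apply hpre
      simp only [idxTU, Sum.elim_inl, Sum.elim_inr]
      omega
    have hUlt : ∀ (i' : Fin (r+1)) (j' : Fin (n+1)),
        ((i':ℕ) < (i:ℕ) ∨ ((i':ℕ) = (i:ℕ) ∧ (j':ℕ) < (j:ℕ))) → m (i',j') = M (i',j') := by
      intro i' j' hcase
      apply hU
      simp only [idxTU, Sum.elim_inr]
      rcases hcase with hlt | ⟨he, hj⟩
      · have hb := block_le (N := n+2) hlt
        have := j'.isLt
        omega
      · have : (i':ℕ)*(n+2) = (i:ℕ)*(n+2) := by rw [he]
        omega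
    have hpreU : ∀ y, idxU r n y < idxU r n (i,j) → m y = M y := by
      rintro ⟨i', j'⟩ hy
      unfold idxU at hy
      simp only at hy
      apply hUlt
      rcases lt_trichotomy (i':ℕ) (i:ℕ) with hlt | he | hlt
      · exact Or.inl hlt
      · refine Or.inr ⟨he, ?_⟩
        have : (i':ℕ)*(n+1) = (i:ℕ)*(n+1) := by rw [he]
        omega
      · exfalso
        have hb := block_le (N := n+1) hlt
        have := j.isLt
        omega
    have le1 : m (i,j) ≤ M (i,j) := hstar _ hpreU
    have e1 := hrel i j
    have e2 := hMM' i j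
    rw [einl] at e1
    by_cases h2 : j = 0
    · subst h2
      rw [if_pos rfl] at e1 e2
      omega
    · rw [if_neg h2] at e1 e2
      omega

theorem prod_monomial_one {σT α : Type*} (s : Finset α) (f : α → (σT →₀ ℕ)) :
    (∏ i ∈ s, (monomial (f i) (1:K))) = monomial (∑ i ∈ s, f i) 1 := by
  induction s using Finset.cons_induction with
  | empty => simp
  | cons a s ha ih => rw [Finset.prod_cons, Finset.sum_cons, ih, monomial_mul, one_mul]

theorem coeff_sub_pow {σT : Type*} [DecidableEq σT] (u t : σT) (hut : u ≠ t) (D : ℕ) :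
    MvPolynomial.coeff (Finsupp.single t D)
      ((MvPolynomial.X u - MvPolynomial.X t : MvPolynomial σT K) ^ D) = (-1)^D := by
  rw [sub_pow, MvPolynomial.coeff_sum]
  have hterm : ∀ k, ((-1 : MvPolynomial σT K)^(k+D) * MvPolynomial.X u ^ k *
      MvPolynomial.X t ^ (D-k) * (D.choose k : MvPolynomial σT K)) =
      monomial (Finsupp.single u k + Finsupp.single t (D-k))
        (((-1)^(k+D) * (D.choose k) : K)) := by
    intro k
    have h1 : ((-1 : MvPolynomial σT K))^(k+D) = MvPolynomial.C ((-1 : K)^(k+D)) := by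
      rw [map_pow, map_neg, map_one]
    have h2 : (D.choose k : MvPolynomial σT K) = MvPolynomial.C ((D.choose k : K)) := by
      rw [map_natCast]
    rw [h1, h2, X_pow_eq_monomial, X_pow_eq_monomial, C_apply, C_apply]
    simp only [monomial_mul]
    congr 1
    · abel
    · ring
  simp only [hterm, MvPolynomial.coeff_monomial]
  rw [Finset.sum_eq_single_of_mem 0 (Finset.mem_range.mpr (Nat.succ_pos D))]
  · rw [if_pos (by simp)]
    simp
  · intro k _ hk
    rw [if_neg]
    intro hc
    have := DFunLike.congr_fun hc u
    simp [Finsupp.single_apply, hut, Ne.symm hut] at this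
    exact hk this

end Stmt9Aux

open Stmt9Aux

/-- if every monomial of `C` is at most `U_{0,0}^D U_{1,1}^D ⋯ U_{r,r}^D` for
the graded lex order and that monomial has coefficient `1`, then
`P = (−1)^D C(v₀,…,v_r)` has leading monomial `T₀^D U_{1,1}^D ⋯ U_{r,r}^D` with leading
coefficient `1`. -/
theorem stmt9 (K : Type*) [Field K] (r n D : ℕ) (hrn : r ≤ n)
    (C : MvPolynomial (Fin (r + 1) × Fin (n + 1)) K)
    (M : (Fin (r + 1) × Fin (n + 1)) →₀ ℕ)
    (hM : M = ∑ i : Fin (r + 1),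
      Finsupp.single (i, Fin.castLE (by omega) i) D)
    (hmon : ∀ m ∈ C.support, m = M ∨ grlexLt (idxU r n) m M)
    (hcoeff : C.coeff M = 1)
    (P : MvPolynomial (Fin (r + 1) ⊕ (Fin (r + 1) × Fin (n + 1))) K)
    (hP : P = (-1 : MvPolynomial (Fin (r + 1) ⊕ (Fin (r + 1) × Fin (n + 1))) K) ^ D *
      substTU K r n C)
    (M' : (Fin (r + 1) ⊕ (Fin (r + 1) × Fin (n + 1))) →₀ ℕ)
    (hM' : M' = Finsupp.single (Sum.inl 0) D +
      ∑ i ∈ Finset.univ.erase (0 : Fin (r + 1)),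
        Finsupp.single (Sum.inr (i, Fin.castLE (by omega) i)) D) :
    P.coeff M' = 1 ∧ ∀ m ∈ P.support, m ≠ M' → grlexLt (idxTU r n) m M' := by
  classical
  have h1n : r + 1 ≤ n + 1 := Nat.succ_le_succ hrn
  subst hP
  have hsubst : substTU K r n C = ∑ m ∈ C.support,
      MvPolynomial.C (C.coeff m) * ∏ x ∈ m.support, vf K r n x ^ m x := by
    rw [show substTU K r n C = MvPolynomial.aeval (vf K r n) C from rfl, aeval_def, eval₂_eq]
    simp only [MvPolynomial.algebraMap_eq]
  have hm1 : ((-1 : MvPolynomial (Fin (r + 1) ⊕ (Fin (r + 1) × Fin (n + 1))) K))^D =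
      MvPolynomial.C ((-1:K)^D) := by
    rw [map_pow, map_neg, map_one]
  -- value lemmas
  have hM'inl : ∀ i, M' (Sum.inl i) = if i = 0 then D else 0 := fun i => by
    rw [hM']; exact M'inl h1n D i
  have hM'inr : ∀ i j, M' (Sum.inr (i,j)) = if i ≠ 0 ∧ (j:ℕ) = (i:ℕ) then D else 0 :=
    fun i j => by rw [hM']; exact M'inr h1n D i j
  have hMval : ∀ i j, M (i,j) = if (j:ℕ) = (i:ℕ) then D else 0 := fun i j => by
    rw [hM]; exact Mval h1n D i j
  have hwM' : Finsupp.weight (wgt r n) M' = M := by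
    rw [hM', hM]; exact weight_M' h1n D
  have hdegM : (M'.sum fun _ e => e) = M.sum fun _ e => e := by
    rw [← hwM', weight_degree]
  constructor
  · -- coefficient computation
    have hQM : (∏ x ∈ M.support, vf K r n x ^ M x) =
        (MvPolynomial.X (Sum.inr ((0 : Fin (r+1)), (0 : Fin (n+1)))) -
          MvPolynomial.X (Sum.inl (0 : Fin (r+1)))) ^ D *
        monomial (∑ i ∈ Finset.univ.erase (0 : Fin (r+1)),
          Finsupp.single (Sum.inr ((i, Fin.castLE h1n i) : Fin (r+1) × Fin (n+1))) D)
          (1 : K) := by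
      have h0 : (∏ x ∈ M.support, vf K r n x ^ M x) =
          M.prod fun x e => vf K r n x ^ e := rfl
      rw [h0, hM]
      rw [← Finsupp.prod_finset_sum_index (fun a => pow_zero _) (fun a b₁ b₂ => pow_add _ _ _)]
      have hps : ∀ i : Fin (r+1),
          (Finsupp.single ((i, Fin.castLE h1n i) : Fin (r+1) × Fin (n+1)) D).prod
            (fun x e => vf K r n x ^ e) = vf K r n (i, Fin.castLE h1n i) ^ D :=
        fun i => Finsupp.prod_single_index (pow_zero _)
      rw [Finset.prod_congr rfl (fun i _ => hps i)]
      rw [← Finset.mul_prod_erase Finset.univ _ (Finset.mem_univ (0 : Fin (r+1)))]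
      have hv0 : vf K r n ((0 : Fin (r+1)), Fin.castLE h1n (0 : Fin (r+1))) ^ D =
          (MvPolynomial.X (Sum.inr ((0 : Fin (r+1)), (0 : Fin (n+1)))) -
            MvPolynomial.X (Sum.inl (0 : Fin (r+1))) : MvPolynomial _ K) ^ D := by
        rw [show (Fin.castLE h1n (0 : Fin (r+1))) = (0 : Fin (n+1)) from rfl]
        simp [vf]
      have hX : ∀ i ∈ Finset.univ.erase (0 : Fin (r+1)),
          vf K r n (i, Fin.castLE h1n i) ^ D =
            monomial (Finsupp.single (Sum.inr ((i, Fin.castLE h1n i) :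
              Fin (r+1) × Fin (n+1))) D) (1:K) := by
        intro i hi
        have hine : Fin.castLE h1n i ≠ (0 : Fin (n+1)) := by
          intro hc
          apply (Finset.mem_erase.mp hi).1
          apply Fin.ext
          simpa using congrArg Fin.val hc
        rw [show vf K r n (i, Fin.castLE h1n i) =
          MvPolynomial.X (Sum.inr (i, Fin.castLE h1n i)) from by simp [vf, hine]]
        rw [X_pow_eq_monomial]
      rw [hv0, Finset.prod_congr rfl hX, prod_monomial_one]
    have hQMcoeff : MvPolynomial.coeff M' (∏ x ∈ M.support, vf K r n x ^ M x) = (-1)^D := by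
      rw [hQM, hM', coeff_mul_monomial, mul_one]
      exact coeff_sub_pow _ _ (by simp) D
    rw [hm1, coeff_C_mul, hsubst, MvPolynomial.coeff_sum]
    rw [Finset.sum_congr rfl (fun m _ => coeff_C_mul (p := ∏ x ∈ m.support, vf K r n x ^ m x)
      M' (C.coeff m))]
    rw [Finset.sum_eq_single M]
    · rw [hcoeff, one_mul, hQMcoeff, ← pow_add]
      exact Even.neg_one_pow ⟨D, rfl⟩
    · intro b hb hbM
      rcases eq_or_ne (MvPolynomial.coeff M' (∏ x ∈ b.support, vf K r n x ^ b x)) 0 with h0 | h0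
      · rw [h0, mul_zero]
      · exact absurd ((Qm_hom b h0).symm.trans hwM') fun hc => hbM hc
    · intro hMnot
      rw [MvPolynomial.notMem_support_iff.mp hMnot, zero_mul]
  · -- support part
    intro m' hm' hne
    have hsupmul : ((((-1 : MvPolynomial (Fin (r + 1) ⊕ (Fin (r + 1) × Fin (n + 1))) K))^D) *
        substTU K r n C).support ⊆ (substTU K r n C).support := by
      rw [hm1, MvPolynomial.C_mul']
      exact MvPolynomial.support_smul
    have hm'2 := hsupmul hm'
    rw [hsubst] at hm'2
    obtain ⟨m, hmC, hm'Q0⟩ := Finset.mem_biUnion.mp (MvPolynomial.support_sum hm'2)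
    have hm'Q : m' ∈ (∏ x ∈ m.support, vf K r n x ^ m x).support := by
      rw [MvPolynomial.C_mul'] at hm'Q0
      exact MvPolynomial.support_smul hm'Q0
    have hwm : Finsupp.weight (wgt r n) m' = m :=
      Qm_hom m (MvPolynomial.mem_support_iff.mp hm'Q)
    have hrel : ∀ i j, m' (Sum.inr (i,j)) + (if j = 0 then m' (Sum.inl i) else 0) = m (i,j) := by
      intro i j
      rw [← weight_apply_pair, hwm]
    have hdegm : (m'.sum fun _ e => e) = m.sum fun _ e => e := by
      rw [← hwm, weight_degree]
    have key : ((m.sum fun _ e => e) < (M.sum fun _ e => e)) ∨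
        (((m.sum fun _ e => e) = (M.sum fun _ e => e)) ∧
          ∀ x, (∀ y, idxU r n y < idxU r n x → m y = M y) → m x ≤ M x) := by
      rcases hmon m hmC with hmM | hlt
      · exact Or.inr ⟨by rw [hmM], fun x _ => le_of_eq (by rw [hmM])⟩
      · rcases hlt with hdlt | ⟨hdeq, x₀, hx₀, hx₀pre⟩
        · exact Or.inl hdlt
        · refine Or.inr ⟨hdeq, fun x hx => ?_⟩
          rcases lt_trichotomy (idxU r n x) (idxU r n x₀) with hlt2 | he | hgt
          · exact le_of_eq (hx₀pre x hlt2)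
          · rw [idxU_inj _ _ he]
            exact le_of_lt hx₀
          · exact absurd (hx x₀ hgt) (ne_of_lt hx₀)
    rcases key with hdlt | ⟨hdeq, hstar⟩
    · exact Or.inl (by rw [hdegm, hdegM]; exact hdlt)
    · right
      refine ⟨by rw [hdegm, hdegM]; exact hdeq, ?_⟩
      have hSne : ∃ y, m' y ≠ M' y := by
        by_contra hc
        push_neg at hc
        exact hne (Finsupp.ext hc)
      obtain ⟨y₀, hy₀⟩ := hSne
      have hS : (Finset.univ.filter (fun y => m' y ≠ M' y)).Nonempty :=
        ⟨y₀, by simp [hy₀]⟩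
      obtain ⟨x', hx'S, hminx⟩ :=
        (Finset.univ.filter (fun y => m' y ≠ M' y)).exists_min_image (idxTU r n) hS
      have hx'ne : m' x' ≠ M' x' := by
        simpa using (Finset.mem_filter.mp hx'S).2
      have hpre : ∀ y, idxTU r n y < idxTU r n x' → m' y = M' y := by
        intro y hy
        by_contra hyne
        exact absurd (hminx y (Finset.mem_filter.mpr ⟨Finset.mem_univ y, hyne⟩))
          (not_le.mpr hy)
      exact ⟨x', claimB D m m' M' M hM'inl hM'inr hMval hrel hstar x' hpre hx'ne, hpre⟩
end

section
/- Let K ⊆ L be a field extension and let F, G ∈ K[Y_1,…,Y_s] be polynomials, not both zero. Then the monic GCD of F and G computed in K[Y_1,…,Y_s] is equal to their monic GCD computed in L[Y_1,…,Y_s] (monic with respect to the graded lexicographic order Y_1 > ⋯ > Y_s). -/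
open MvPolynomial

open MvPolynomial

noncomputable section StmtAux

variable {K L : Type*} [Field K] [Field L] [Algebra K L] {σ : Type*}

def coeffMap (π : L →ₗ[K] K) (M : MvPolynomial σ L) : MvPolynomial σ K :=
  AddMonoidAlgebra.ofCoeff (Finsupp.mapRange π π.map_zero (AddMonoidAlgebra.coeff M))

lemma coeff_coeffMap (π : L →ₗ[K] K) (M : MvPolynomial σ L) (m : σ →₀ ℕ) :
    (coeffMap π M).coeff m = π (M.coeff m) := rfl

lemma coeffMap_map_mul [DecidableEq σ] (π : L →ₗ[K] K) (P : MvPolynomial σ K)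
    (M : MvPolynomial σ L) :
    coeffMap π (MvPolynomial.map (algebraMap K L) P * M) = P * coeffMap π M := by
  ext m
  rw [coeff_coeffMap, MvPolynomial.coeff_mul, MvPolynomial.coeff_mul, map_sum]
  refine Finset.sum_congr rfl fun x _ => ?_
  rw [coeff_coeffMap, MvPolynomial.coeff_map, ← Algebra.smul_def, map_smul, smul_eq_mul]

lemma map_dvd_of_dvd_coeffMap {ι : Type*} (B : Module.Basis ι K L) (P : MvPolynomial σ K)
    (M : MvPolynomial σ L)
    (h : ∀ i : ι, P ∣ coeffMap (B.coord i) M) :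
    MvPolynomial.map (algebraMap K L) P ∣ M := by
  classical
  set t : Finset ι := M.support.biUnion fun m => (B.repr (M.coeff m)).support with ht
  have key : ∀ c : L, (B.repr c).support ⊆ t → (∑ i ∈ t, B.repr c i • B i) = c := by
    intro c hsub
    rw [← Finset.sum_subset hsub (fun i _ hi => by
      rw [Finsupp.notMem_support_iff.mp hi, zero_smul])]
    have := B.linearCombination_repr c
    rw [Finsupp.linearCombination_apply, Finsupp.sum] at this
    exact this
  have hM : M = ∑ i ∈ t, B i • MvPolynomial.map (algebraMap K L) (coeffMap (B.coord i) M) := by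
    ext m
    rw [MvPolynomial.coeff_sum]
    have : ∀ i ∈ t, (B i • MvPolynomial.map (algebraMap K L)
        (coeffMap (B.coord i) M)).coeff m = B.repr (M.coeff m) i • B i := by
      intro i _
      rw [MvPolynomial.coeff_smul, MvPolynomial.coeff_map, coeff_coeffMap, smul_eq_mul,
        mul_comm, ← Algebra.smul_def]
      rfl
    rw [Finset.sum_congr rfl this]
    by_cases hm : M.coeff m = 0
    · rw [hm]
      refine (Finset.sum_eq_zero fun i _ => ?_).symm
      simp
    · exact (key _ (Finset.subset_biUnion_of_mem
        (fun m => (B.repr (M.coeff m)).support)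
        (MvPolynomial.mem_support_iff.mpr hm))).symm
  rw [hM]
  refine Finset.dvd_sum fun i _ => ?_
  obtain ⟨Q, hQ⟩ := h i
  rw [hQ, map_mul]
  exact ⟨B i • MvPolynomial.map (algebraMap K L) Q, (mul_smul_comm _ _ _).symm⟩

end StmtAux


/-- `c` is the leading coefficient of `F` for the graded lexicographic order given by `idx`. -/
def IsLeadCoeff {σ R : Type*} [CommSemiring R] (idx : σ → ℕ)
    (F : MvPolynomial σ R) (c : R) : Prop :=
  c ≠ 0 ∧ ∃ m, F.coeff m = c ∧ ∀ m' ∈ F.support, m' ≠ m → grlexLt idx m' m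

/-- `H` is the monic (for the graded lex order given by `idx`) GCD of `F` and `G`. -/
def IsMonicGcd {σ R : Type*} [CommSemiring R] (idx : σ → ℕ)
    (F G H : MvPolynomial σ R) : Prop :=
  H ∣ F ∧ H ∣ G ∧ (∀ D, D ∣ F → D ∣ G → D ∣ H) ∧ IsLeadCoeff idx H 1

/-- the monic GCD (for graded lex) of two polynomials, not both zero, is the
same whether computed over `K` or over a field extension `L` of `K`. -/

theorem stmt12 (K L : Type*) [Field K] [Field L] [Algebra K L] (s : ℕ)
    (F G H : MvPolynomial (Fin s) K) (hFG : ¬ (F = 0 ∧ G = 0))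
    (hgcd : IsMonicGcd (fun v : Fin s => (v : ℕ)) F G H) :
    IsMonicGcd (fun v : Fin s => (v : ℕ))
      (MvPolynomial.map (algebraMap K L) F)
      (MvPolynomial.map (algebraMap K L) G)
      (MvPolynomial.map (algebraMap K L) H) := by
  classical
  obtain ⟨hHF, hHG, hmax, h1ne, m, hm, hltm⟩ := hgcd
  have hinj : Function.Injective (algebraMap K L) := (algebraMap K L).injective
  have hlead : IsLeadCoeff (fun v : Fin s => (v : ℕ))
      (MvPolynomial.map (algebraMap K L) H) 1 := by
    refine ⟨one_ne_zero, m, ?_, ?_⟩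
    · rw [MvPolynomial.coeff_map, hm, map_one]
    · intro m' hm' hne
      refine hltm m' ?_ hne
      rw [MvPolynomial.mem_support_iff] at hm' ⊢
      intro h0
      exact hm' (by rw [MvPolynomial.coeff_map, h0, map_zero])
  refine ⟨map_dvd _ hHF, map_dvd _ hHG, ?_, hlead⟩
  intro D hDF hDG
  by_cases hF0 : F = 0
  · by_cases hG0 : G = 0
    · exact absurd ⟨hF0, hG0⟩ hFG
    · exact hDG.trans (map_dvd _ (hmax G (hF0 ▸ dvd_zero G) dvd_rfl))
  by_cases hG0 : G = 0
  · exact hDF.trans (map_dvd _ (hmax F dvd_rfl (hG0 ▸ dvd_zero F)))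
  letI : NormalizationMonoid (MvPolynomial (Fin s) K) :=
    UniqueFactorizationMonoid.normalizationMonoid.toNormalizationMonoid
  letI : GCDMonoid (MvPolynomial (Fin s) K) := UniqueFactorizationMonoid.toGCDMonoid _
  letI : NormalizationMonoid (MvPolynomial (Fin s) L) :=
    UniqueFactorizationMonoid.normalizationMonoid.toNormalizationMonoid
  letI : GCDMonoid (MvPolynomial (Fin s) L) := UniqueFactorizationMonoid.toGCDMonoid _
  set F' := MvPolynomial.map (algebraMap K L) F with hF'def
  set G' := MvPolynomial.map (algebraMap K L) G with hG'def
  have hF'0 : F' ≠ 0 := fun h =>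
    hF0 (MvPolynomial.map_injective _ hinj (by simpa using h))
  have hG'0 : G' ≠ 0 := fun h =>
    hG0 (MvPolynomial.map_injective _ hinj (by simpa using h))
  have hHg : Associated H (gcd F G) :=
    associated_of_dvd_dvd (dvd_gcd hHF hHG) (hmax _ (gcd_dvd_left F G) (gcd_dvd_right F G))
  have hmaplcm : ∀ M : MvPolynomial (Fin s) L, F' ∣ M → G' ∣ M →
      MvPolynomial.map (algebraMap K L) (lcm F G) ∣ M := by
    intro M hFM hGM
    obtain ⟨Q, hQ⟩ := hFM
    obtain ⟨Q', hQ'⟩ := hGM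
    refine map_dvd_of_dvd_coeffMap (Module.Basis.ofVectorSpace K L) _ _ fun i => ?_
    refine lcm_dvd ⟨coeffMap ((Module.Basis.ofVectorSpace K L).coord i) Q, ?_⟩
      ⟨coeffMap ((Module.Basis.ofVectorSpace K L).coord i) Q', ?_⟩
    · rw [hQ, hF'def, coeffMap_map_mul]
    · rw [hQ', hG'def, coeffMap_map_mul]
  have hl'lcm : Associated (lcm F' G') (MvPolynomial.map (algebraMap K L) (lcm F G)) :=
    associated_of_dvd_dvd
      (lcm_dvd (map_dvd _ (dvd_lcm_left F G)) (map_dvd _ (dvd_lcm_right F G)))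
      (hmaplcm _ (dvd_lcm_left F' G') (dvd_lcm_right F' G'))
  have hl'0 : lcm F' G' ≠ 0 := fun h => (lcm_eq_zero_iff F' G').mp h |>.elim hF'0 hG'0
  have e1 : Associated (F' * G')
      (MvPolynomial.map (algebraMap K L) (gcd F G * lcm F G)) := by
    rw [hF'def, hG'def, ← map_mul]
    exact (gcd_mul_lcm F G).symm.map _
  have e2 : Associated (MvPolynomial.map (algebraMap K L) (gcd F G * lcm F G))
      (MvPolynomial.map (algebraMap K L) H * lcm F' G') := by
    rw [map_mul]
    exact Associated.mul_mul (hHg.map _).symm hl'lcm.symm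
  have big := ((gcd_mul_lcm F' G').trans e1).trans e2
  have hgH : Associated (gcd F' G') (MvPolynomial.map (algebraMap K L) H) :=
    Associated.of_mul_right big (Associated.refl _) hl'0
  exact (dvd_gcd hDF hDG).trans hgH.dvd
end
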